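/- Let L = (α_{kj})_{1≤k,j≤n} be an n×n integer matrix with det L ≠ 0, let a = (a₁,…,a_n) ∈ (ℂ*)ⁿ, and let f(z) = 1 + Σ_{k=1}^n a_k ∏_{j=1}^n z_j^{α_{kj}} (so the support of f is the vertex set of a simplex). Then the amoeba of V_f is solid: the complement ℝⁿ \ 𝒜_f has exactly n+1 connected components. (Lemma 3.3(i).) -/

import Mathlib

open Complex


lemma step_lemma (x : ℂ) (ρ : ℝ) (hρ : 0 ≤ ρ) (t : ℝ)
    (h1 : |‖x‖ - ρ| ≤ t) (h2 : t ≤ ‖x‖ + ρ) :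
    ∃ w : ℂ, ‖w‖ = ρ ∧ ‖x + w‖ = t := by
  set s := ‖x‖ with hs
  have hs0 : 0 ≤ s := norm_nonneg x
  by_cases hx : x = 0
  · have hsz : s = 0 := by simp [hs, hx]
    have ht : t = ρ := by
      rw [hsz] at h1 h2
      rw [zero_sub, abs_neg, _root_.abs_of_nonneg hρ] at h1
      rw [zero_add] at h2
      linarith
    exact ⟨(ρ : ℂ), by simp [Complex.norm_real, _root_.abs_of_nonneg hρ],
      by simp [hx, ht, Complex.norm_real, _root_.abs_of_nonneg hρ]⟩
  · have hsne : s ≠ 0 := fun h => hx (norm_eq_zero.mp h)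
    have hscne : (s : ℂ) ≠ 0 := by exact_mod_cast hsne
    set g : ℝ → ℝ := fun θ => ‖(s : ℂ) + ρ * Complex.exp (θ * I)‖ with hg
    have hcont : Continuous g := by
      apply continuous_norm.comp
      continuity
    have hg0 : g 0 = s + ρ := by
      simp only [hg]
      norm_num
      rw [← Complex.ofReal_add, Complex.norm_real, Real.norm_eq_abs]
      exact _root_.abs_of_nonneg (by linarith)
    have hgpi : g Real.pi = |s - ρ| := by
      simp only [hg, Complex.exp_pi_mul_I]
      rw [show (s : ℂ) + ρ * (-1) = ((s - ρ : ℝ) : ℂ) by push_cast; ring]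
      rw [Complex.norm_real, Real.norm_eq_abs]
    have hmem : t ∈ Set.Icc (g Real.pi) (g 0) := by
      rw [hg0, hgpi]; exact ⟨h1, h2⟩
    obtain ⟨θ, -, hθ⟩ := intermediate_value_Icc' Real.pi_nonneg hcont.continuousOn hmem
    refine ⟨(x / s) * (ρ * Complex.exp (θ * I)), ?_, ?_⟩
    · rw [norm_mul, norm_mul, norm_div]
      simp [← hs, hsne, Complex.norm_exp, Complex.norm_real,
        _root_.abs_of_nonneg hρ, _root_.abs_of_nonneg hs0]
    · have hxs : x = (x / s) * s := by
        rw [div_mul_cancel₀ _ hscne]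
      calc ‖x + x / s * (ρ * Complex.exp (θ * I))‖
          = ‖(x / s) * ((s : ℂ) + ρ * Complex.exp (θ * I))‖ := by
            rw [mul_add]; nth_rewrite 1 [hxs]; ring_nf
        _ = ‖x / s‖ * g θ := by rw [norm_mul]
        _ = t := by
            rw [norm_div, ← hs, Complex.norm_real, Real.norm_eq_abs, _root_.abs_of_nonneg hs0,
              div_self hsne, one_mul, hθ]

lemma polygon_lemma : ∀ (m : ℕ) (r : Fin m → ℝ), (∀ k, 0 ≤ r k) → ∀ (c : ℝ), 0 ≤ c →
    c ≤ ∑ k, r k → (∀ k, 2 * r k ≤ c + ∑ j, r j) →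
    ∃ w : Fin m → ℂ, (∀ k, ‖w k‖ = r k) ∧ ‖∑ k, w k‖ = c := by
  intro m
  induction m with
  | zero =>
    intro r hr c hc0 hc1 _
    refine ⟨fun k => 0, fun k => k.elim0, ?_⟩
    have : c = 0 := le_antisymm (by simpa using hc1) hc0
    simp [this]
  | succ m ih =>
    intro r hr c hc0 hc1 hc2
    set r' : Fin m → ℝ := fun k => r k.castSucc with hr'
    set ρ := r (Fin.last m) with hρdef
    have hρ : 0 ≤ ρ := hr _
    have hsum : ∑ k, r k = ∑ k, r' k + ρ := Fin.sum_univ_castSucc r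
    have hsum' : 0 ≤ ∑ k, r' k := Finset.sum_nonneg fun k _ => hr _
    set c' := min (∑ k, r' k) (c + ρ) with hc'
    have hc'0 : 0 ≤ c' := le_min hsum' (by linarith)
    have hc'1 : c' ≤ ∑ k, r' k := min_le_left _ _
    have hρc : ρ ≤ c + ∑ k, r' k := by
      have := hc2 (Fin.last m); rw [hsum] at this; linarith
    have hc'2 : ∀ k, 2 * r' k ≤ c' + ∑ j, r' j := by
      intro k
      rcases min_cases (∑ j, r' j) (c + ρ) with ⟨h, _⟩ | ⟨h, _⟩
      · rw [hc', h]
        have : r' k ≤ ∑ j, r' j := Finset.single_le_sum (fun j _ => hr j.castSucc) (Finset.mem_univ k)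
        linarith
      · have h2 := hc2 k.castSucc
        rw [hsum] at h2
        rw [hc', h]
        exact h2.trans (by linarith)
    obtain ⟨w', hw'1, hw'2⟩ := ih r' (fun k => hr _) c' hc'0 hc'1 hc'2
    have h1 : |‖∑ k, w' k‖ - ρ| ≤ c := by
      rw [hw'2, abs_le]
      constructor
      · rcases min_cases (∑ k, r' k) (c + ρ) with ⟨h, _⟩ | ⟨h, _⟩ <;> rw [hc', h] <;> linarith
      · have : c' ≤ c + ρ := min_le_right _ _
        linarith
    have h2 : c ≤ ‖∑ k, w' k‖ + ρ := by
      rw [hw'2]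
      rcases min_cases (∑ k, r' k) (c + ρ) with ⟨h, _⟩ | ⟨h, _⟩ <;> rw [hc', h]
      · rw [hsum] at hc1; linarith
      · linarith
    obtain ⟨wl, hwl1, hwl2⟩ := step_lemma (∑ k, w' k) ρ hρ c h1 h2
    refine ⟨Fin.snoc w' wl, ?_, ?_⟩
    · intro k
      induction k using Fin.lastCases with
      | last => simpa using hwl1
      | cast i => simpa using hw'1 i
    · rw [Fin.sum_univ_castSucc]
      simpa using hwl2

lemma exp_zpow_real (x : ℝ) (m : ℤ) : Real.exp x ^ m = Real.exp (m * x) := by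
  rw [← Real.rpow_intCast, Real.rpow_def_of_pos (Real.exp_pos x), Real.log_exp, mul_comm]

lemma mem_iff (n : ℕ) (L : Matrix (Fin n) (Fin n) ℤ) (hL : L.det ≠ 0)
    (a : Fin n → ℂ) (ha : ∀ k, a k ≠ 0) (x : Fin n → ℝ) :
    (∃ z : Fin n → ℂ, (∀ j, z j ≠ 0) ∧ 1 + ∑ k, a k * ∏ j, z j ^ (L k j) = 0 ∧
      ∀ j, x j = Real.log (‖z j‖))
    ↔ ∃ w : Fin n → ℂ,
        (∀ k, ‖w k‖ = ‖a k‖ * Real.exp (∑ j, (L k j : ℝ) * x j)) ∧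
        1 + ∑ k, w k = 0 := by
  constructor
  · rintro ⟨z, hz0, hzf, hzx⟩
    refine ⟨fun k => a k * ∏ j, z j ^ (L k j), fun k => ?_, hzf⟩
    rw [norm_mul, norm_prod]
    congr 1
    rw [Real.exp_sum]
    apply Finset.prod_congr rfl
    intro j _
    rw [norm_zpow]
    have habs : ‖z j‖ = Real.exp (x j) := by
      rw [hzx j, Real.exp_log (norm_pos_iff.mpr (hz0 j))]
    rw [habs, exp_zpow_real]
  · rintro ⟨w, hwabs, hwsum⟩
    set A : Matrix (Fin n) (Fin n) ℝ := (Int.castRingHom ℝ).mapMatrix L with hA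
    have hAdet : IsUnit A.det := by
      rw [hA, ← RingHom.map_det]
      simp only [Int.coe_castRingHom, isUnit_iff_ne_zero, ne_eq, Int.cast_eq_zero]
      exact hL
    set φ : Fin n → ℝ := fun k => (w k).arg - (a k).arg with hφ
    set θ : Fin n → ℝ := A⁻¹.mulVec φ with hθ
    have hAθ : A.mulVec θ = φ := by
      rw [hθ, Matrix.mulVec_mulVec, Matrix.mul_nonsing_inv A hAdet, Matrix.one_mulVec]
    set z : Fin n → ℂ := fun j => Complex.exp (x j + θ j * I) with hzdef
    have habs : ∀ j, ‖z j‖ = Real.exp (x j) := by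
      intro j
      rw [hzdef]
      simp [Complex.norm_exp]
    refine ⟨z, fun j => Complex.exp_ne_zero _, ?_, fun j => by rw [habs j, Real.log_exp]⟩
    have key : ∀ k, a k * ∏ j, z j ^ (L k j) = w k := by
      intro k
      have hφk : ∑ j, (L k j : ℝ) * θ j = φ k := by
        have := congrFun hAθ k
        simpa [Matrix.mulVec, dotProduct, hA] using this
      have hprod : ∏ j, z j ^ (L k j) =
          Complex.exp ((∑ j, (L k j : ℝ) * x j : ℝ) + (φ k : ℝ) * I) := by
        have heach : ∀ j, z j ^ (L k j) = Complex.exp ((L k j : ℂ) * (x j + θ j * I)) := by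
          intro j
          rw [hzdef, Complex.exp_int_mul]
        rw [Finset.prod_congr rfl (fun j _ => heach j), ← Complex.exp_sum]
        congr 1
        rw [← hφk]
        push_cast
        rw [Finset.sum_mul, ← Finset.sum_add_distrib]
        apply Finset.sum_congr rfl
        intro j _
        ring
      have hak : a k = (‖a k‖ : ℂ) * Complex.exp ((a k).arg * I) :=
        (Complex.norm_mul_exp_arg_mul_I (a k)).symm
      have hwk : w k = (‖w k‖ : ℂ) * Complex.exp ((w k).arg * I) :=
        (Complex.norm_mul_exp_arg_mul_I (w k)).symm
      have hexp : Complex.exp ((a k).arg * I) * Complex.exp ((φ k : ℝ) * I)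
          = Complex.exp ((w k).arg * I) := by
        rw [← Complex.exp_add, hφ]
        congr 1
        push_cast
        ring
      rw [hprod, Complex.exp_add, ← Complex.ofReal_exp, hwk, hwabs k, Complex.ofReal_mul]
      nth_rewrite 1 [hak]
      linear_combination ((‖a k‖ : ℂ) *
        ((Real.exp (∑ j, (L k j : ℝ) * x j) : ℝ) : ℂ)) * hexp
    rw [Finset.sum_congr rfl fun k _ => key k, hwsum]

lemma exists_w_iff (m : ℕ) (s : Fin m → ℝ) (hs : ∀ k, 0 ≤ s k) :
    (∃ w : Fin m → ℂ, (∀ k, ‖w k‖ = s k) ∧ 1 + ∑ k, w k = 0)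
    ↔ (1 ≤ ∑ k, s k ∧ ∀ k, 2 * s k ≤ 1 + ∑ j, s j) := by
  constructor
  · rintro ⟨w, habs, hsum⟩
    have hws : ∑ k, w k = -1 := by linear_combination hsum
    have hsum_eq : ∀ (t : Finset (Fin m)), ∑ k ∈ t, s k = ∑ k ∈ t, ‖w k‖ :=
      fun t => Finset.sum_congr rfl fun k _ => (habs k).symm
    constructor
    · have := norm_sum_le Finset.univ w
      rw [hws] at this
      simp only [norm_neg, norm_one] at this
      rw [hsum_eq]
      exact this
    · intro k
      have hwk : w k = -1 - ∑ j ∈ Finset.univ.erase k, w j := by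
        have h := Finset.add_sum_erase Finset.univ w (Finset.mem_univ k)
        rw [hws] at h
        linear_combination h
      have hle : ‖w k‖ ≤ 1 + ∑ j ∈ Finset.univ.erase k, ‖w j‖ := by
        rw [hwk]
        calc ‖-1 - ∑ j ∈ Finset.univ.erase k, w j‖
            ≤ ‖-1‖ + ‖∑ j ∈ Finset.univ.erase k, w j‖ := by
              rw [sub_eq_add_neg]
              exact (norm_add_le _ _).trans (by simp only [norm_neg, norm_one, le_refl])
          _ ≤ 1 + ∑ j ∈ Finset.univ.erase k, ‖w j‖ := by
              simp only [norm_neg, norm_one]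
              exact add_le_add_right (norm_sum_le _ _) 1
      have hsplit : ∑ j, ‖w j‖ =
          ‖w k‖ + ∑ j ∈ Finset.univ.erase k, ‖w j‖ :=
        (Finset.add_sum_erase Finset.univ _ (Finset.mem_univ k)).symm
      rw [habs k] at hle hsplit
      rw [hsum_eq Finset.univ, hsplit]
      linarith [hle]
  · rintro ⟨h1, h2⟩
    obtain ⟨w, habs, hsum⟩ := polygon_lemma m s hs 1 zero_le_one h1 h2
    have hne : ∑ k, w k ≠ 0 := by
      intro h
      rw [h, norm_zero] at hsum
      exact one_ne_zero hsum.symm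
    refine ⟨fun k => (-(∑ j, w j)⁻¹) * w k, fun k => ?_, ?_⟩
    · rw [norm_mul, norm_neg, norm_inv, hsum, inv_one, one_mul, habs]
    · rw [← Finset.mul_sum, neg_mul, inv_mul_cancel₀ hne]
      ring

lemma convexOn_finset_sum {ι E : Type*} [AddCommGroup E] [Module ℝ E]
    (t : Finset ι) (f : ι → E → ℝ) (h : ∀ i ∈ t, ConvexOn ℝ Set.univ (f i)) :
    ConvexOn ℝ Set.univ (fun x => ∑ i ∈ t, f i x) := by
  classical
  induction t using Finset.induction with
  | empty => simpa using convexOn_const (0:ℝ) convex_univ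
  | @insert i t hi ih =>
    simp only [Finset.sum_insert hi]
    exact (h i (Finset.mem_insert_self i t)).add
      (ih fun j hj => h j (Finset.mem_insert_of_mem hj))

lemma convexOn_exp_affine {n : ℕ} (g : (Fin n → ℝ) →ᵃ[ℝ] ℝ) :
    ConvexOn ℝ Set.univ (fun y => Real.exp (g y)) := by
  have := convexOn_exp.comp_affineMap g
  simpa [Function.comp_def] using this

/-- **Lemma 3.3(i)** (second part). For `f(z) = 1 + Σ_k a_k z^{α_k}` with invertible
integer exponent matrix `L` (so the support of `f` is the vertex set of a simplex),
the amoeba of `V_f` is solid: its complement has exactly `n + 1` connected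
components. -/
theorem amoeba_simplex_is_solid
    (n : ℕ) (L : Matrix (Fin n) (Fin n) ℤ) (hL : L.det ≠ 0)
    (a : Fin n → ℂ) (ha : ∀ k, a k ≠ 0)
    (amoebaf : Set (Fin n → ℝ))
    (hamoebaf : amoebaf = {x : Fin n → ℝ | ∃ z : Fin n → ℂ,
      (∀ j, z j ≠ 0) ∧ 1 + ∑ k, a k * ∏ j, z j ^ (L k j) = 0 ∧
      ∀ j, x j = Real.log (‖z j‖)}) :
    {C | ∃ x ∈ amoebafᶜ, C = connectedComponentIn amoebafᶜ x}.ncard = n + 1 := by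
  classical
  set A : Matrix (Fin n) (Fin n) ℝ := (Int.castRingHom ℝ).mapMatrix L with hA
  have hAdet : IsUnit A.det := by
    rw [hA, ← RingHom.map_det]
    simp only [Int.coe_castRingHom, isUnit_iff_ne_zero, ne_eq, Int.cast_eq_zero]
    exact hL
  set c : Fin n → ℝ := fun k => Real.log (‖a k‖) with hc
  set T : (Fin n → ℝ) → (Fin n → ℝ) := fun x => A.mulVec x + c with hT
  set S : (Fin n → ℝ) → (Fin n → ℝ) := fun y => A⁻¹.mulVec (y - c) with hS
  have hST : ∀ x, S (T x) = x := by
    intro x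
    rw [hS, hT]
    simp only [add_sub_cancel_right]
    rw [Matrix.mulVec_mulVec, Matrix.nonsing_inv_mul A hAdet, Matrix.one_mulVec]
  have hTS : ∀ y, T (S y) = y := by
    intro y
    rw [hS, hT]
    simp only []
    rw [Matrix.mulVec_mulVec, Matrix.mul_nonsing_inv A hAdet, Matrix.one_mulVec]
    simp
  have hScont : Continuous S := by
    rw [hS]
    have h1 : Continuous fun v : Fin n → ℝ => A⁻¹.mulVec v :=
      (Matrix.mulVecLin A⁻¹).continuous_of_finiteDimensional
    exact h1.comp (continuous_id.sub continuous_const)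
  have hTcont : Continuous T := by
    rw [hT]
    have h1 : Continuous fun v : Fin n → ℝ => A.mulVec v :=
      (Matrix.mulVecLin A).continuous_of_finiteDimensional
    exact h1.add continuous_const
  have hs_eq : ∀ (x : Fin n → ℝ) (k : Fin n),
      ‖a k‖ * Real.exp (∑ j, (L k j : ℝ) * x j) = Real.exp (T x k) := by
    intro x k
    rw [hT]
    simp only [Pi.add_apply]
    rw [Real.exp_add]
    have h1 : A.mulVec x k = ∑ j, (L k j : ℝ) * x j := by
      simp [Matrix.mulVec, dotProduct, hA]
    rw [h1, hc, Real.exp_log (norm_pos_iff.mpr (ha k))]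
    ring
  have hchar : ∀ x, x ∈ amoebaf ↔
      (1 ≤ ∑ k, Real.exp (T x k) ∧ ∀ k, 2 * Real.exp (T x k) ≤ 1 + ∑ j, Real.exp (T x j)) := by
    intro x
    rw [hamoebaf, Set.mem_setOf_eq]
    have h3 := (mem_iff n L hL a ha x).trans (exists_w_iff n
      (fun k => ‖a k‖ * Real.exp (∑ j, (L k j : ℝ) * x j))
      (fun k => mul_nonneg (norm_nonneg _) (Real.exp_pos _).le))
    simp only [hs_eq x] at h3
    exact h3
  set U : Option (Fin n) → Set (Fin n → ℝ) := fun i =>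
    Option.elim i {x | ∑ k, Real.exp (T x k) < 1}
      (fun k => {x | 1 + ∑ j, Real.exp (T x j) < 2 * Real.exp (T x k)}) with hU
  set V : Option (Fin n) → Set (Fin n → ℝ) := fun i =>
    Option.elim i {y | ∑ k, Real.exp (y k) < 1}
      (fun k => {y | Real.exp (-(y k)) + ∑ j, Real.exp (y j - y k) < 2}) with hV
  have hUV : ∀ i, U i = T ⁻¹' (V i) := by
    intro i
    cases i with
    | none => rfl
    | some k =>
      ext x
      simp only [hU, hV, Option.elim, Set.mem_setOf_eq, Set.mem_preimage]
      have hE : 0 < Real.exp (T x k) := Real.exp_pos _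
      rw [Real.exp_neg,
        Finset.sum_congr rfl (fun j (_ : j ∈ Finset.univ) => Real.exp_sub (T x j) (T x k)),
        ← Finset.sum_div, inv_eq_one_div, ← add_div, div_lt_iff₀ hE]
  have hUopen : ∀ i, IsOpen (U i) := by
    have hTk : ∀ k, Continuous fun x => Real.exp (T x k) :=
      fun k => Real.continuous_exp.comp ((continuous_apply k).comp hTcont)
    intro i
    cases i with
    | none =>
      simp only [hU, Option.elim]
      exact isOpen_lt (continuous_finset_sum _ fun k _ => hTk k) continuous_const
    | some k =>
      simp only [hU, Option.elim]
      exact isOpen_lt (continuous_const.add (continuous_finset_sum _ fun j _ => hTk j))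
        (continuous_const.mul (hTk k))
  have hVconv : ∀ i, Convex ℝ (V i) := by
    intro i
    cases i with
    | none =>
      have hco : ConvexOn ℝ Set.univ (fun y : Fin n → ℝ => ∑ k, Real.exp (y k)) :=
        convexOn_finset_sum _ _ (fun k _ => by
          simpa using convexOn_exp_affine (LinearMap.proj k : (Fin n → ℝ) →ₗ[ℝ] ℝ).toAffineMap)
      have := hco.convex_lt 1
      have heq : {y : Fin n → ℝ | y ∈ Set.univ ∧ ∑ k, Real.exp (y k) < 1}
          = {y : Fin n → ℝ | ∑ k, Real.exp (y k) < 1} := by ext y; simp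
      simp only [hV, Option.elim]
      rwa [heq] at this
    | some k =>
      have hco : ConvexOn ℝ Set.univ
          (fun y : Fin n → ℝ => Real.exp (-(y k)) + ∑ j, Real.exp (y j - y k)) := by
        apply ConvexOn.add
        · simpa using convexOn_exp_affine
            (-(LinearMap.proj k : (Fin n → ℝ) →ₗ[ℝ] ℝ)).toAffineMap
        · exact convexOn_finset_sum _ _ (fun j _ => by
            simpa using convexOn_exp_affine
              ((LinearMap.proj j : (Fin n → ℝ) →ₗ[ℝ] ℝ)
                - (LinearMap.proj k : (Fin n → ℝ) →ₗ[ℝ] ℝ)).toAffineMap)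
      have := hco.convex_lt 2
      have heq : {y : Fin n → ℝ | y ∈ Set.univ ∧
            Real.exp (-(y k)) + ∑ j, Real.exp (y j - y k) < 2}
          = {y : Fin n → ℝ | Real.exp (-(y k)) + ∑ j, Real.exp (y j - y k) < 2} := by
        ext y; simp
      simp only [hV, Option.elim]
      rwa [heq] at this
  have hVne : ∀ i, (V i).Nonempty := by
    intro i
    cases i with
    | none =>
      refine ⟨fun _ => Real.log ((n + 1 : ℝ)⁻¹), ?_⟩
      simp only [hV, Option.elim, Set.mem_setOf_eq]
      rw [Finset.sum_congr rfl (fun k (_ : k ∈ Finset.univ) =>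
        Real.exp_log (by positivity : (0:ℝ) < (n + 1 : ℝ)⁻¹))]
      rw [Finset.sum_const, Finset.card_univ, Fintype.card_fin, nsmul_eq_mul]
      rw [← div_eq_mul_inv, div_lt_one (by positivity)]
      linarith
    | some k =>
      have hn1 : 1 ≤ n := k.pos
      refine ⟨Function.update (fun _ => (0:ℝ)) k (Real.log ((n:ℝ) + 2)), ?_⟩
      simp only [hV, Option.elim, Set.mem_setOf_eq]
      set y : Fin n → ℝ := Function.update (fun _ => (0:ℝ)) k (Real.log ((n:ℝ) + 2)) with hy
      have hyk : y k = Real.log ((n:ℝ) + 2) := by rw [hy]; simp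
      have hyne : ∀ j, j ≠ k → y j = 0 := by
        intro j hj
        rw [hy, Function.update_of_ne hj]
      have hpos : (0:ℝ) < (n:ℝ) + 2 := by positivity
      have hterm1 : Real.exp (-(y k)) = ((n:ℝ) + 2)⁻¹ := by
        rw [hyk, Real.exp_neg, Real.exp_log hpos]
      have hsum : ∑ j, Real.exp (y j - y k)
          = 1 + ((n:ℝ) - 1) * ((n:ℝ) + 2)⁻¹ := by
        rw [← Finset.add_sum_erase Finset.univ _ (Finset.mem_univ k)]
        congr 1
        · rw [sub_self, Real.exp_zero]
        · rw [Finset.sum_congr rfl (fun j hj => by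
            rw [hyne j (Finset.ne_of_mem_erase hj), hyk, zero_sub, Real.exp_neg,
              Real.exp_log hpos])]
          rw [Finset.sum_const, Finset.card_erase_of_mem (Finset.mem_univ k),
            Finset.card_univ, Fintype.card_fin, nsmul_eq_mul]
          congr 1
          rw [Nat.cast_sub hn1, Nat.cast_one]
      rw [hterm1, hsum]
      have hinv : ((n:ℝ) + 2)⁻¹ * ((n:ℝ) + 2) = 1 := inv_mul_cancel₀ (ne_of_gt hpos)
      have hinvpos : (0:ℝ) < ((n:ℝ) + 2)⁻¹ := by positivity
      nlinarith [hinv, hinvpos]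
  have hUSV : ∀ i, U i = S '' (V i) := by
    intro i
    rw [hUV i]
    ext x
    constructor
    · intro hx
      exact ⟨T x, hx, hST x⟩
    · rintro ⟨y, hy, rfl⟩
      simpa [Set.mem_preimage, hTS y] using hy
  have hUne : ∀ i, (U i).Nonempty := fun i => by
    rw [hUSV]; exact (hVne i).image S
  have hUpre : ∀ i, IsPreconnected (U i) := fun i => by
    rw [hUSV]; exact ((hVconv i).isPreconnected).image S hScont.continuousOn
  have hcover : amoebafᶜ = ⋃ i, U i := by
    ext x
    simp only [Set.mem_compl_iff, hchar x, Set.mem_iUnion]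
    constructor
    · intro h
      push_neg at h
      by_cases h1 : 1 ≤ ∑ k, Real.exp (T x k)
      · obtain ⟨k, hk⟩ := h h1
        exact ⟨some k, by simpa [hU] using hk⟩
      · exact ⟨none, by simpa [hU] using lt_of_not_ge h1⟩
    · rintro ⟨i, hi⟩ ⟨hm1, hm2⟩
      cases i with
      | none =>
        simp only [hU, Option.elim, Set.mem_setOf_eq] at hi
        linarith
      | some k =>
        simp only [hU, Option.elim, Set.mem_setOf_eq] at hi
        linarith [hm2 k]
  have hdisj : ∀ i j, i ≠ j → ∀ x, x ∈ U i → x ∈ U j → False := by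
    have hpos : ∀ (x : Fin n → ℝ) k, (0:ℝ) < Real.exp (T x k) := fun x k => Real.exp_pos _
    have hsingle : ∀ (x : Fin n → ℝ) k, Real.exp (T x k) ≤ ∑ j, Real.exp (T x j) :=
      fun x k => Finset.single_le_sum (fun j _ => (hpos x j).le) (Finset.mem_univ k)
    intro i j hij x hxi hxj
    match i, j with
    | none, none => exact hij rfl
    | none, some k =>
      simp only [hU, Option.elim, Set.mem_setOf_eq] at hxi hxj
      linarith [hsingle x k]
    | some k, none =>
      simp only [hU, Option.elim, Set.mem_setOf_eq] at hxi hxj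
      linarith [hsingle x k]
    | some k, some l =>
      have hkl : k ≠ l := by rintro rfl; exact hij rfl
      simp only [hU, Option.elim, Set.mem_setOf_eq] at hxi hxj
      have hpair : Real.exp (T x k) + Real.exp (T x l) ≤ ∑ j, Real.exp (T x j) := by
        have hsub := Finset.sum_le_sum_of_subset_of_nonneg
          (Finset.subset_univ ({k, l} : Finset (Fin n))) (fun j _ _ => (hpos x j).le)
        rwa [Finset.sum_pair hkl] at hsub
      linarith
  have hkey : ∀ i, ∀ x ∈ U i, connectedComponentIn amoebafᶜ x = U i := by
    intro i x hx
    have hxc : x ∈ amoebafᶜ := by rw [hcover]; exact Set.mem_iUnion.mpr ⟨i, hx⟩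
    apply Set.Subset.antisymm
    · by_contra hcon
      obtain ⟨y, hyK, hyU⟩ := Set.not_subset.mp hcon
      have hyc : y ∈ amoebafᶜ := connectedComponentIn_subset _ _ hyK
      rw [hcover] at hyc
      obtain ⟨j, hyj⟩ := Set.mem_iUnion.mp hyc
      have hji : j ≠ i := by rintro rfl; exact hyU hyj
      have hpre := isPreconnected_connectedComponentIn (x := x) (F := amoebafᶜ)
      obtain ⟨z, hz⟩ := hpre (U i) (⋃ j' ∈ {j' : Option (Fin n) | j' ≠ i}, U j') (hUopen i)
        (isOpen_biUnion fun j' _ => hUopen j')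
        (by
          intro p hp
          have hp2 : p ∈ ⋃ i', U i' := by
            rw [← hcover]; exact connectedComponentIn_subset _ _ hp
          obtain ⟨i', hi'⟩ := Set.mem_iUnion.mp hp2
          by_cases hii : i' = i
          · exact Set.mem_union_left _ (hii ▸ hi')
          · exact Set.mem_union_right _ (Set.mem_biUnion hii hi'))
        ⟨x, mem_connectedComponentIn hxc, hx⟩
        ⟨y, hyK, Set.mem_biUnion hji hyj⟩
      obtain ⟨hzK, hz1, hz2⟩ := hz
      obtain ⟨j', hj'i, hzj'⟩ := by simpa using hz2
      exact hdisj i j' (Ne.symm hj'i) z hz1 hzj'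
    · exact (hUpre i).subset_connectedComponentIn hx
        (by rw [hcover]; exact Set.subset_iUnion U i)
  have hset : {C | ∃ x ∈ amoebafᶜ, C = connectedComponentIn amoebafᶜ x} = Set.range U := by
    ext C
    constructor
    · rintro ⟨x, hxc, rfl⟩
      have hx2 : x ∈ ⋃ i, U i := by rw [← hcover]; exact hxc
      obtain ⟨i, hi⟩ := Set.mem_iUnion.mp hx2
      exact ⟨i, (hkey i x hi).symm⟩
    · rintro ⟨i, rfl⟩
      obtain ⟨x, hx⟩ := hUne i
      exact ⟨x, by rw [hcover]; exact Set.mem_iUnion.mpr ⟨i, hx⟩, (hkey i x hx).symm⟩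
  rw [hset]
  have hinj : Function.Injective U := by
    intro i j hij'
    by_contra hne
    obtain ⟨x, hx⟩ := hUne i
    exact hdisj i j hne x hx (hij' ▸ hx)
  rw [← Set.image_univ, Set.ncard_image_of_injective _ hinj, Set.ncard_univ,
    Nat.card_eq_fintype_card, Fintype.card_option, Fintype.card_fin]
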